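/- arXiv:1609.07456 — 3 statements merged into one kernel-verified Lean document; each statement's English description precedes it below -/
import Mathlib

section
/- Let i : Γ' → Γ be a homomorphism of finite groups and Ω a finite Γ-set. Then the maximal multiplicity of an irreducible representation of Γ in ℂ[Ω] is at most [Γ : i(Γ')] times the maximal multiplicity of an irreducible representation of Γ' in ℂ[Ω] (where Γ' acts on Ω through i). -/
open CategoryTheory Module
section
variable {k G : Type} [Field k] [Monoid G]

noncomputable def subRep (W : FDRep k G) (p : Submodule k W)
    (hp : ∀ g : G, ∀ x ∈ p, W.ρ g x ∈ p) : Representation k G p where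
  toFun g := (W.ρ g).restrict (hp g)
  map_one' := by ext x; simp [LinearMap.restrict_apply]
  map_mul' g h := by ext x; simp [LinearMap.restrict_apply]

noncomputable def subFDRep (W : FDRep k G) (p : Submodule k W)
    (hp : ∀ g : G, ∀ x ∈ p, W.ρ g x ∈ p) : FDRep k G :=
  FDRep.of (subRep W p hp)

noncomputable def subInc (W : FDRep k G) (p : Submodule k W)
    (hp : ∀ g : G, ∀ x ∈ p, W.ρ g x ∈ p) : subFDRep W p hp ⟶ W where
  hom := FGModuleCat.ofHom p.subtype
  comm g := by ext x; rfl

lemma mono_subInc (W : FDRep k G) (p : Submodule k W)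
    (hp : ∀ g : G, ∀ x ∈ p, W.ρ g x ∈ p) : Mono (subInc W p hp) := by
  constructor
  intro Z a b w
  ext z
  have := congrArg Action.Hom.hom w
  have h2 := congrFun (congrArg (fun (f : Z.V ⟶ W.V) => (f : Z → W)) this) z
  exact Subtype.ext h2

lemma eq_top_of_invariant (W : FDRep k G) [Simple W] (p : Submodule k W)
    (hp : ∀ g : G, ∀ x ∈ p, W.ρ g x ∈ p) (hne : p ≠ ⊥) : p = ⊤ := by
  have hι : subInc W p hp ≠ 0 := by
    obtain ⟨x, hxp, hx⟩ := Submodule.ne_bot_iff p |>.mp hne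
    intro h
    apply hx
    have : (subInc W p hp).hom ⟨x, hxp⟩ = x := rfl
    rw [h] at this
    exact this.symm
  haveI := mono_subInc W p hp
  haveI := isIso_of_mono_of_nonzero hι
  rw [Submodule.eq_top_iff']
  intro y
  have h1 : (inv (subInc W p hp) ≫ subInc W p hp) = 𝟙 W := IsIso.inv_hom_id _
  have h2 := congrArg Action.Hom.hom h1
  have h3 := congrFun (congrArg (fun (f : W.V ⟶ W.V) => (f : W → W)) h2) y
  have : ((subInc W p hp).hom ((inv (subInc W p hp)).hom y) : W) = y := h3
  rw [← this]
  exact ((inv (subInc W p hp)).hom y).2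
-- helper: pointwise comm for a morphism into subFDRep
lemma hom_comm_apply' {X Y : FDRep k G} (f : X ⟶ Y) (g : G) (x : X) :
    f.hom (X.ρ g x) = Y.ρ g (f.hom x) :=
  congrFun (congrArg (fun (h : X.V ⟶ Y.V) => (h : X → Y)) (f.comm g)) x

lemma simple_subFDRep (W : FDRep k G) (p : Submodule k W)
    (hp : ∀ g : G, ∀ x ∈ p, W.ρ g x ∈ p) (hne : p ≠ ⊥)
    (hmin : ∀ q : Submodule k W, (∀ g : G, ∀ x ∈ q, W.ρ g x ∈ q) → q ≠ ⊥ → q ≤ p → q = p) :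
    Simple (subFDRep W p hp) := by
  constructor
  intro Y f hmono
  constructor
  · -- IsIso f → f ≠ 0
    intro hiso h0
    obtain ⟨x, hxp, hx⟩ := Submodule.ne_bot_iff p |>.mp hne
    rw [h0] at hiso
    have h1 : 𝟙 (subFDRep W p hp) = 0 := by
      rw [← IsIso.inv_hom_id (0 : Y ⟶ subFDRep W p hp), Limits.comp_zero]
    have h2 := congrArg Action.Hom.hom h1
    have h3 := congrFun (congrArg
      (fun (h : (subFDRep W p hp).V ⟶ (subFDRep W p hp).V) => (h : p → p)) h2) ⟨x, hxp⟩
    exact hx (congrArg Subtype.val h3)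
  · -- f ≠ 0 → IsIso f
    intro hf
    -- f.hom : Y →ₗ[k] p  (as linear map)
    set φ : Y →ₗ[k] p := f.hom.hom.hom with hφ
    have hφne : φ ≠ 0 := by
      intro h
      apply hf
      ext1
      apply FGModuleCat.hom_ext
      exact h
    -- the image in W
    have hinv : ∀ g : G, ∀ x ∈ (LinearMap.range φ).map p.subtype,
        W.ρ g x ∈ (LinearMap.range φ).map p.subtype := by
      rintro g x ⟨u, ⟨y, rfl⟩, rfl⟩
      refine ⟨φ (Y.ρ g y), ⟨Y.ρ g y, rfl⟩, ?_⟩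
      have := hom_comm_apply' f g y
      have h4 : φ (Y.ρ g y) = (subFDRep W p hp).ρ g (φ y) := this
      rw [h4]
      rfl
    have hqne : (LinearMap.range φ).map p.subtype ≠ ⊥ := by
      obtain ⟨y, hy⟩ : ∃ y, φ y ≠ 0 := by
        by_contra h
        push_neg at h
        exact hφne (LinearMap.ext h)
      intro h
      apply hy
      have : (φ y : W) ∈ (LinearMap.range φ).map p.subtype := ⟨φ y, ⟨y, rfl⟩, rfl⟩
      rw [h, Submodule.mem_bot] at this
      exact Subtype.ext this
    have hq := hmin _ hinv hqne (Submodule.map_subtype_le p _)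
    have hrange : LinearMap.range φ = ⊤ := by
      apply Submodule.map_injective_of_injective p.injective_subtype
      rw [hq, Submodule.map_top, Submodule.range_subtype]
    have hsurj : Function.Surjective φ := LinearMap.range_eq_top.mp hrange
    -- injectivity via Mono
    have hker : ∀ g : G, ∀ x ∈ LinearMap.ker φ, Y.ρ g x ∈ LinearMap.ker φ := by
      intro g x hx
      have := hom_comm_apply' f g x
      have hx0 : φ x = 0 := hx
      simp only [LinearMap.mem_ker]
      have h4 : φ (Y.ρ g x) = (subFDRep W p hp).ρ g (φ x) := this
      rw [h4, hx0]
      exact map_zero ((subFDRep W p hp).ρ g)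
    have hinj : Function.Injective φ := by
      rw [← LinearMap.ker_eq_bot]
      set κ : subFDRep Y (LinearMap.ker φ) hker ⟶ Y :=
        ⟨FGModuleCat.ofHom (LinearMap.ker φ).subtype, fun g => by ext x; rfl⟩ with hκ
      have hzero : κ ≫ f = 0 ≫ f := by
        rw [Limits.zero_comp]
        ext1
        apply FGModuleCat.hom_ext
        apply LinearMap.ext
        rintro ⟨x, hx⟩
        exact hx
      have := hmono.right_cancellation κ 0 hzero
      rw [Submodule.eq_bot_iff]
      intro x hx
      have h5 : κ.hom ⟨x, hx⟩ = x := rfl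
      rw [this] at h5
      exact h5.symm
    -- build the inverse
    let e : Y ≃ₗ[k] p := LinearEquiv.ofBijective φ ⟨hinj, hsurj⟩
    refine ⟨⟨⟨FGModuleCat.ofHom (e.symm : p →ₗ[k] Y), ?_⟩, ?_, ?_⟩⟩
    · intro g
      apply FGModuleCat.hom_ext
      apply LinearMap.ext
      intro x
      show e.symm ((subFDRep W p hp).ρ g x) = Y.ρ g (e.symm x)
      apply e.injective
      refine (e.apply_symm_apply _).trans ?_
      show (subFDRep W p hp).ρ g x = φ (Y.ρ g (e.symm x))
      have h6 : φ (Y.ρ g (e.symm x)) = (subFDRep W p hp).ρ g (φ (e.symm x)) :=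
        hom_comm_apply' f g _
      rw [h6]
      congr 1
      exact (e.apply_symm_apply x).symm
    · ext1
      apply FGModuleCat.hom_ext
      apply LinearMap.ext
      intro y
      exact e.symm_apply_apply y
    · ext1
      apply FGModuleCat.hom_ext
      apply LinearMap.ext
      intro x
      exact e.apply_symm_apply x

lemma exists_minimal_aux (W : FDRep k G) :
    ∀ n : ℕ, ∀ p : Submodule k W, (∀ g : G, ∀ x ∈ p, W.ρ g x ∈ p) → p ≠ ⊥ → finrank k p ≤ n →
    ∃ q : Submodule k W, (∀ g : G, ∀ x ∈ q, W.ρ g x ∈ q) ∧ q ≠ ⊥ ∧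
      (∀ r : Submodule k W, (∀ g : G, ∀ x ∈ r, W.ρ g x ∈ r) → r ≠ ⊥ → r ≤ q → r = q) := by
  intro n
  induction n with
  | zero =>
    intro p hp hne hr
    exfalso
    apply hne
    have : finrank k p = 0 := Nat.le_zero.mp hr
    exact Submodule.finrank_eq_zero.mp this
  | succ n ih =>
    intro p hp hne hr
    by_cases h : ∀ r : Submodule k W, (∀ g : G, ∀ x ∈ r, W.ρ g x ∈ r) → r ≠ ⊥ → r ≤ p → r = p
    · exact ⟨p, hp, hne, h⟩
    · push_neg at h
      obtain ⟨r, hrinv, hrne, hrle, hrna⟩ := h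
      have hlt : r < p := lt_of_le_of_ne hrle hrna
      have : finrank k r ≤ n := by
        have := Submodule.finrank_lt_finrank_of_lt (K := k) (V := W) hlt
        omega
      exact ih r hrinv hrne this

lemma exists_ne_zero (W : FDRep k G) [Simple W] : ∃ v : W, v ≠ 0 := by
  by_contra h
  push_neg at h
  apply id_nonzero W
  ext1
  apply FGModuleCat.hom_ext
  apply LinearMap.ext
  intro x
  show ((𝟙 W : W ⟶ W).hom x : W) = 0
  exact h _

lemma exists_minimal (W : FDRep k G) (hW : ∃ v : W, v ≠ 0) :
    ∃ q : Submodule k W, (∀ g : G, ∀ x ∈ q, W.ρ g x ∈ q) ∧ q ≠ ⊥ ∧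
      (∀ r : Submodule k W, (∀ g : G, ∀ x ∈ r, W.ρ g x ∈ r) → r ≠ ⊥ → r ≤ q → r = q) := by
  obtain ⟨v, hv⟩ := hW
  apply exists_minimal_aux W (finrank k W) ⊤ (fun g x _ => trivial)
  · intro h
    rw [Submodule.eq_bot_iff] at h
    exact hv (h v trivial)
  · exact le_of_eq (finrank_top k W)
end



open CategoryTheory

/-- Let `i : Γ' → Γ` be a homomorphism of finite groups and `Ω` a finite
`Γ`-set.  Then the maximal multiplicity of an irreducible representation of `Γ` in `ℂ[Ω]`
is at most `[Γ : i(Γ')]` times the maximal multiplicity of an irreducible representation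
of `Γ'` in `ℂ[Ω]` (where `Γ'` acts on `Ω` through `i`).  We formulate the inequality of
maxima by saying that any bound `M` for all the `Γ'`-multiplicities yields the bound
`[Γ : i(Γ')] * M` for all the `Γ`-multiplicities. -/
theorem stmt1 {Γ' Γ : Type} [Group Γ'] [Fintype Γ'] [Group Γ] [Fintype Γ]
    (i : Γ' →* Γ) (Ω : Type) [Fintype Ω] [MulAction Γ Ω] (M : ℕ)
    (hM : ∀ ρ' : FDRep ℂ Γ', Simple ρ' →
      Module.finrank ℂ
        (ρ' ⟶ FDRep.of ((Representation.ofMulAction ℂ Γ Ω).comp i)) ≤ M)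
    (ρ : FDRep ℂ Γ) (hρ : Simple ρ) :
    Module.finrank ℂ (ρ ⟶ FDRep.of (Representation.ofMulAction ℂ Γ Ω)) ≤
      i.range.index * M := by
  classical
  haveI := hρ
  set A : FDRep ℂ Γ := FDRep.of (Representation.ofMulAction ℂ Γ Ω) with hA
  set B : FDRep ℂ Γ' := FDRep.of ((Representation.ofMulAction ℂ Γ Ω).comp i) with hB
  -- the restricted representation
  set W' : FDRep ℂ Γ' := FDRep.of ((ρ.ρ).comp i) with hW'
  have hWne : ∃ v : W', v ≠ 0 := exists_ne_zero ρ
  obtain ⟨U, hUinv, hUne, hUmin⟩ := exists_minimal W' hWne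
  set σ' : FDRep ℂ Γ' := subFDRep W' U hUinv with hσ'
  haveI hσsimple : Simple σ' := simple_subFDRep W' U hUinv hUne hUmin
  -- the injection Hom_Γ(ρ, A) → Hom_{Γ'}(σ', B)
  set Φ : (ρ ⟶ A) →ₗ[ℂ] (σ' ⟶ B) :=
    { toFun := fun f =>
        { hom := FGModuleCat.ofHom ((f.hom.hom.hom : ρ →ₗ[ℂ] A) ∘ₗ U.subtype)
          comm := fun g' => by
            apply FGModuleCat.hom_ext
            apply LinearMap.ext
            intro x
            exact hom_comm_apply' f (i g') x.1 }
      map_add' := fun f g => by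
        ext1
        apply FGModuleCat.hom_ext
        show ((f + g).hom.hom.hom : ρ →ₗ[ℂ] A) ∘ₗ U.subtype = _
        rw [Action.add_hom]
        show (f.hom.hom.hom + g.hom.hom.hom : ρ →ₗ[ℂ] A) ∘ₗ U.subtype
          = (f.hom.hom.hom : ρ →ₗ[ℂ] A) ∘ₗ U.subtype + (g.hom.hom.hom : ρ →ₗ[ℂ] A) ∘ₗ U.subtype
        exact LinearMap.add_comp _ _ _
      map_smul' := fun c f => by
        ext1
        apply FGModuleCat.hom_ext
        show ((c • f).hom.hom.hom : ρ →ₗ[ℂ] A) ∘ₗ U.subtype = _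
        rw [Action.smul_hom]
        show (c • f.hom.hom.hom : ρ →ₗ[ℂ] A) ∘ₗ U.subtype = c • ((f.hom.hom.hom : ρ →ₗ[ℂ] A) ∘ₗ U.subtype)
        exact LinearMap.smul_comp _ _ _ } with hΦ
  have hΦinj : Function.Injective Φ := by
    rw [injective_iff_map_eq_zero]
    intro f hf0
    by_contra hf
    -- f.hom is injective since ρ is simple
    have hker : ∀ g : Γ, ∀ x ∈ LinearMap.ker (f.hom.hom.hom : ρ →ₗ[ℂ] A), ρ.ρ g x ∈
        LinearMap.ker (f.hom.hom.hom : ρ →ₗ[ℂ] A) := by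
      intro g x hx
      have h1 := hom_comm_apply' f g x
      have hx0 : f.hom x = 0 := hx
      simp only [LinearMap.mem_ker]
      show f.hom (ρ.ρ g x) = 0
      rw [h1, hx0, map_zero]
    have hkbot : LinearMap.ker (f.hom.hom.hom : ρ →ₗ[ℂ] A) = ⊥ := by
      by_contra h
      have := eq_top_of_invariant ρ _ hker h
      apply hf
      ext1
      apply FGModuleCat.hom_ext
      apply LinearMap.ext
      intro x
      have hx : x ∈ LinearMap.ker (f.hom.hom.hom : ρ →ₗ[ℂ] A) := this ▸ Submodule.mem_top
      exact hx
    obtain ⟨u, hu, hune⟩ := Submodule.ne_bot_iff U |>.mp hUne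
    have h2 : (Φ f).hom ⟨u, hu⟩ = f.hom u := rfl
    rw [hf0] at h2
    have h3 : (0 : σ' ⟶ B).hom = 0 := Action.zero_hom
    rw [h3] at h2
    have : u ∈ LinearMap.ker (f.hom.hom.hom : ρ →ₗ[ℂ] A) := h2.symm
    rw [hkbot, Submodule.mem_bot] at this
    exact hune this
  have hle : Module.finrank ℂ (ρ ⟶ A) ≤ Module.finrank ℂ (σ' ⟶ B) :=
    LinearMap.finrank_le_finrank_of_injective hΦinj
  have hle2 := hM σ' hσsimple
  have hidx : i.range.index ≠ 0 := Subgroup.index_ne_zero_of_finite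
  calc Module.finrank ℂ (ρ ⟶ A) ≤ M := le_trans hle hle2
    _ ≤ i.range.index * M := Nat.le_mul_of_pos_left M (Nat.pos_of_ne_zero hidx)
end

section
/- Let Γ ⊆ Γ'' ⊆ Γ' be finite groups with Γ'' = Γ·Z(Γ'), and let Ω be a finite Γ-set. Then μ(Γ, Ω) ≤ μ(Γ'', Ω ×_Γ Γ''), i.e., the maximal multiplicity of an irreducible representation of Γ in ℂ[Ω] is at most the maximal multiplicity of an irreducible representation of Γ'' in the induced permutation representation Ind_Γ^{Γ''} ℂ[Ω]. -/
open CategoryTheory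

section InducedSet

variable {K L : Type} [Group K] [Group L] (j : K →* L) (Ω : Type) [MulAction K Ω]

/-- The diagonal `K`-orbit equivalence on `Ω × L` (`K` acting on `L` through `j` by
left translations): `(ω₁,g₁) ≈ (ω₂,g₂)` iff `γ·(ω₂,g₂) = (ω₁,g₁)` for some `γ : K`. -/
def indSetoid : Setoid (Ω × L) where
  r p q := ∃ γ : K, (γ • q.1, j γ * q.2) = p
  iseqv := by
    constructor
    · intro p; exact ⟨1, by simp⟩
    · rintro p q ⟨γ, rfl⟩
      exact ⟨γ⁻¹, by simp [smul_smul, ← mul_assoc]⟩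
    · rintro p q r ⟨γ, rfl⟩ ⟨δ, rfl⟩
      exact ⟨γ * δ, by simp [smul_smul, mul_assoc]⟩

/-- The induced set `Ω ×_K L`: the quotient of `Ω × L` by the diagonal `K`-action. -/
def IndSet := Quotient (indSetoid j Ω)

/-- `L` acts on `Ω ×_K L` by right translation on the second factor. -/
noncomputable instance : MulAction L (IndSet j Ω) where
  smul h := Quotient.lift (fun p => Quotient.mk (indSetoid j Ω) (p.1, p.2 * h⁻¹))
    (by rintro p q ⟨γ, rfl⟩
        exact Quotient.sound ⟨γ, by simp [mul_assoc]⟩)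
  one_smul := by
    rintro ⟨p⟩; exact Quotient.sound ⟨1, by simp⟩
  mul_smul := by
    rintro a b ⟨p⟩; exact Quotient.sound ⟨1, by simp [mul_assoc]⟩

noncomputable instance [Finite Ω] [Finite L] : Fintype (IndSet j Ω) := by
  classical
  exact @Quotient.fintype (Ω × L) (Fintype.ofFinite _) (indSetoid j Ω)
    (fun _ _ => Classical.dec _)

end InducedSet

section Aux
open Pointwise


noncomputable instance : RootableBy ℂˣ ℕ :=
  rootableByOfPowLeftSurj _ _ (fun {n} hn x => by
    obtain ⟨z, hz⟩ := IsAlgClosed.exists_pow_nat_eq (x : ℂ) (Nat.pos_of_ne_zero hn)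
    have hz0 : z ≠ 0 := by
      intro h; rw [h, zero_pow hn] at hz; exact x.ne_zero hz.symm
    exact ⟨Units.mk0 z hz0, Units.ext (by simp [hz])⟩)

noncomputable instance : RootableBy ℂˣ ℤ := Group.rootableByIntOfRootableByNat ℂˣ

noncomputable instance : DivisibleBy (Additive ℂˣ) ℤ where
  div a n := Additive.ofMul (RootableBy.root a.toMul n)
  div_zero a := congrArg Additive.ofMul (RootableBy.root_zero _)
  div_cancel a hn := by
    apply Additive.toMul.injective
    rw [toMul_zsmul]
    exact RootableBy.root_cancel _ hn

lemma exists_char_extension {H : Type} [CommGroup H] (S : Subgroup H) (χ₀ : ↥S →* ℂˣ) :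
    ∃ χ : H →* ℂˣ, ∀ s : ↥S, χ ↑s = χ₀ s := by
  let f : AddCommGrpCat.of (Additive ↥S) ⟶ AddCommGrpCat.of (Additive H) :=
    AddCommGrpCat.ofHom (MonoidHom.toAdditive S.subtype)
  haveI : Mono f := (AddCommGrpCat.mono_iff_injective f).mpr
    (fun a b hab => congrArg Additive.ofMul (Subtype.ext (congrArg Additive.toMul hab)))
  let g : AddCommGrpCat.of (Additive ↥S) ⟶ AddCommGrpCat.of (Additive ℂˣ) :=
    AddCommGrpCat.ofHom (MonoidHom.toAdditive χ₀)
  haveI : Injective (AddCommGrpCat.of (Additive ℂˣ)) := AddCommGrpCat.injective_of_divisible _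
  let h := Injective.factorThru g f
  refine ⟨MonoidHom.toAdditive.symm h.hom, fun s => ?_⟩
  have := ConcreteCategory.congr_hom (Injective.comp_factorThru g f) (Additive.ofMul s)
  exact congrArg Additive.toMul this

section FDRepLemmas
variable {G : Type} [Group G]

lemma fdRep_hom_comm_apply {X Y : FDRep ℂ G} (f : X ⟶ Y) (g : G) (x : X) :
    f.hom (X.ρ g x) = Y.ρ g (f.hom x) :=
  ConcreteCategory.congr_hom (f.comm g) x

lemma fdRep_mono_of_injective {X Y : FDRep ℂ G} (f : X ⟶ Y)
    (hf : Function.Injective f.hom) : Mono f := by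
  constructor
  intro Z u v huv
  ext x
  exact hf (ConcreteCategory.congr_hom (congrArg Action.Hom.hom huv) x)

lemma fdRep_mono_injective {X Y : FDRep ℂ G} (f : X ⟶ Y) [Mono f] :
    Function.Injective f.hom := by
  set W := LinearMap.ker f.hom.hom.hom with hW
  have hWinv : ∀ (g : G) (w : ↥W), X.ρ g w.1 ∈ W := by
    intro g w
    have h1 : f.hom (X.ρ g w.1) = Y.ρ g (f.hom w.1) := fdRep_hom_comm_apply f g _
    have hw0 : f.hom w.1 = 0 := w.2
    simp only [hw0, map_zero] at h1
    exact h1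
  let τ : Representation ℂ G ↥W :=
    { toFun := fun g => LinearMap.restrict (X.ρ g) (fun w hw => hWinv g ⟨w, hw⟩)
      map_one' := by
        ext w
        simp [LinearMap.restrict_apply, Subtype.ext_iff]
      map_mul' := fun g h => by
        apply LinearMap.ext
        intro w
        apply Subtype.ext
        show X.ρ (g * h) w.1 = X.ρ g (X.ρ h w.1)
        rw [map_mul]
        rfl }
  let k : FDRep.of τ ⟶ X :=
    { hom := FGModuleCat.ofHom W.subtype
      comm := fun g => by ext w; rfl }
  have hk : k ≫ f = (0 : FDRep.of τ ⟶ X) ≫ f := by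
    rw [Limits.zero_comp]
    ext w
    exact w.2
  have hk0 : k = 0 := (cancel_mono f).mp hk
  have key : ∀ x : X, f.hom x = 0 → x = 0 := by
    intro x hx
    have := ConcreteCategory.congr_hom (congrArg Action.Hom.hom hk0) (⟨x, hx⟩ : ↥W)
    exact this
  exact (injective_iff_map_eq_zero f.hom.hom.hom).mpr key

lemma fdRep_isIso_of_bijective {X Y : FDRep ℂ G} (f : X ⟶ Y)
    (hf : Function.Bijective f.hom) : IsIso f := by
  let e : X ≃ₗ[ℂ] Y := LinearEquiv.ofBijective f.hom.hom.hom hf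
  have hfe : ∀ x : X, f.hom x = e x := fun x => rfl
  let ginv : Y ⟶ X :=
    { hom := FGModuleCat.ofHom e.symm.toLinearMap
      comm := fun g => by
        ext y
        apply hf.injective
        show f.hom (e.symm (Y.ρ g y)) = f.hom (X.ρ g (e.symm y))
        rw [fdRep_hom_comm_apply, hfe, hfe, e.apply_symm_apply, e.apply_symm_apply] }
  refine ⟨ginv, ?_, ?_⟩
  · ext x
    exact e.symm_apply_apply x
  · ext y
    show f.hom (e.symm y) = y
    rw [hfe, e.apply_symm_apply]

end FDRepLemmas

section CentralChar
variable {G' : Type} [Group G'] [Fintype G'] (Γ : Subgroup G')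

open scoped IsMulCommutative in
lemma exists_central_char (ρ : FDRep ℂ ↥Γ) (hρ : Simple ρ) :
    ∃ χ : ↥(Subgroup.center G') →* ℂˣ,
      ∀ (z : G') (hz : z ∈ Subgroup.center G') (hzΓ : z ∈ Γ),
        ρ.ρ ⟨z, hzΓ⟩ = ((χ ⟨z, hz⟩ : ℂˣ) : ℂ) • LinearMap.id := by
  classical
  haveI := hρ
  -- a nonzero vector
  have hV : ∃ v : ρ.V, v ≠ 0 := by
    by_contra hc
    push_neg at hc
    apply id_nonzero ρ
    ext v
    exact hc v
  obtain ⟨v₀, hv₀⟩ := hV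
  have huniq : ∀ a b : ℂ, a • (LinearMap.id : ρ.V →ₗ[ℂ] ρ.V) = b • LinearMap.id → a = b := by
    intro a b hab
    have := congrArg (fun f => (f : ρ.V →ₗ[ℂ] ρ.V) v₀) hab
    simpa using smul_left_injective ℂ hv₀ this
  have key : ∀ (γ : ↥Γ), (γ : G') ∈ Subgroup.center G' →
      ∃ c : ℂ, ρ.ρ γ = c • LinearMap.id := by
    intro γ hz
    let e : ρ ⟶ ρ :=
      { hom := FGModuleCat.ofHom (ρ.ρ γ)
        comm := fun g => by
          apply FGModuleCat.hom_ext
          let g' : ↥Γ := g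
          have hcomm : γ * g' = g' * γ := Subtype.ext (Subgroup.mem_center_iff.mp hz (g' : G')).symm
          change (ρ.ρ γ).comp (ρ.ρ g') = (ρ.ρ g').comp (ρ.ρ γ)
          rw [← Module.End.mul_eq_comp, ← Module.End.mul_eq_comp, ← map_mul, ← map_mul, hcomm] }
    obtain ⟨c, hc⟩ := endomorphism_simple_eq_smul_id ℂ e
    refine ⟨c, ?_⟩
    have := congrArg (fun t => t.hom.hom.hom) hc
    exact this.symm
  set S := Γ.subgroupOf (Subgroup.center G') with hS
  have hmem : ∀ s : ↥S, ((s : ↥(Subgroup.center G')) : G') ∈ Γ :=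
    fun s => Subgroup.mem_subgroupOf.mp s.2
  have hc0 : ∀ s : ↥S, ∃ c : ℂ, ρ.ρ ⟨((s : ↥(Subgroup.center G')) : G'), hmem s⟩
      = c • LinearMap.id :=
    fun s => key ⟨_, hmem s⟩ (s : ↥(Subgroup.center G')).2
  choose c hc using hc0
  have hne : ∀ s : ↥S, c s ≠ 0 := by
    intro s hzero
    set γs : ↥Γ := ⟨_, hmem s⟩
    have h1 : (ρ.ρ γs⁻¹) * (ρ.ρ γs) = 1 := by rw [← map_mul, inv_mul_cancel, map_one]
    rw [hc s, hzero, zero_smul, mul_zero] at h1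
    exact hv₀ (by simpa using DFunLike.congr_fun h1.symm v₀)
  have hone : c 1 = 1 := by
    apply huniq
    rw [← hc 1, one_smul]
    have : (⟨(((1 : ↥S) : ↥(Subgroup.center G')) : G'), hmem 1⟩ : ↥Γ) = 1 := by
      apply Subtype.ext; simp
    rw [this, map_one]
    rfl
  have hmul : ∀ s t : ↥S, c (s * t) = c s * c t := by
    intro s t
    apply huniq
    rw [← hc (s * t)]
    have : (⟨(((s * t : ↥S) : ↥(Subgroup.center G')) : G'), hmem (s * t)⟩ : ↥Γ)
        = ⟨_, hmem s⟩ * ⟨_, hmem t⟩ := by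
      apply Subtype.ext; simp
    rw [this, map_mul, hc s, hc t]
    ext v
    simp [smul_smul, mul_comm]
  let χ₀ : ↥S →* ℂˣ :=
    { toFun := fun s => Units.mk0 (c s) (hne s)
      map_one' := Units.ext (by simpa using hone)
      map_mul' := fun s t => Units.ext (by simpa using hmul s t) }
  obtain ⟨χ, hχ⟩ := exists_char_extension S χ₀
  refine ⟨χ, fun z hz hzΓ => ?_⟩
  have hsmem : (⟨z, hz⟩ : ↥(Subgroup.center G')) ∈ S := Subgroup.mem_subgroupOf.mpr hzΓ
  have := hχ ⟨⟨z, hz⟩, hsmem⟩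
  rw [this]
  exact hc ⟨⟨z, hz⟩, hsmem⟩

lemma exists_sigma (ρ : FDRep ℂ ↥Γ) (hρ : Simple ρ) :
    ∃ σ : Representation ℂ ↥(Γ ⊔ Subgroup.center G') ↥(ρ.V),
      ∀ γ : ↥Γ, σ (Subgroup.inclusion le_sup_left γ) = ρ.ρ γ := by
  classical
  obtain ⟨χ, hχ⟩ := exists_central_char Γ ρ hρ
  have hdecomp : ∀ x : ↥(Γ ⊔ Subgroup.center G'),
      ∃ (γ : G') (_ : γ ∈ Γ) (z : G') (_ : z ∈ Subgroup.center G'), (x : G') = γ * z := by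
    intro x
    have hx : (x : G') ∈ ((Γ : Set G') * ((Subgroup.center G') : Set G')) := by
      rw [← Subgroup.mul_normal]; exact x.2
    obtain ⟨γ, hγ, z, hz, hmul⟩ := hx
    exact ⟨γ, hγ, z, hz, hmul.symm⟩
  choose γf hγf zf hzf hxf using hdecomp
  set σfun : ↥(Γ ⊔ Subgroup.center G') → (↥(ρ.V) →ₗ[ℂ] ↥(ρ.V)) :=
    fun x => ((χ ⟨zf x, hzf x⟩ : ℂˣ) : ℂ) • (ρ.ρ ⟨γf x, hγf x⟩) with hσfun
  have hwd : ∀ (x : ↥(Γ ⊔ Subgroup.center G')) (γ z : G') (hγ : γ ∈ Γ)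
      (hz : z ∈ Subgroup.center G'), (x : G') = γ * z →
      σfun x = ((χ ⟨z, hz⟩ : ℂˣ) : ℂ) • (ρ.ρ ⟨γ, hγ⟩) := by
    intro x γ z hγ hz hx
    have heq : γf x * zf x = γ * z := by rw [← hxf x, hx]
    set w : G' := γ⁻¹ * γf x with hw
    have hwΓ : w ∈ Γ := Γ.mul_mem (Γ.inv_mem hγ) (hγf x)
    have hw2 : w = z * (zf x)⁻¹ := by
      have h3 : γ * z * (zf x)⁻¹ = γf x := mul_inv_eq_iff_eq_mul.mpr heq.symm
      rw [hw, ← h3]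
      group
    have hwZ : w ∈ Subgroup.center G' := by
      rw [hw2]; exact (Subgroup.center G').mul_mem hz ((Subgroup.center G').inv_mem (hzf x))
    have hγeq : (⟨γf x, hγf x⟩ : ↥Γ) = ⟨γ, hγ⟩ * ⟨w, hwΓ⟩ := by
      apply Subtype.ext; simp [hw]
    have hzeq : (⟨zf x, hzf x⟩ : ↥(Subgroup.center G')) * ⟨w, hwZ⟩ = ⟨z, hz⟩ := by
      apply Subtype.ext
      show zf x * w = z
      rw [hw2, ← mul_assoc, Subgroup.mem_center_iff.mp hz (zf x), mul_assoc]
      simp [mul_assoc]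
    rw [hσfun]
    dsimp only
    rw [hγeq, map_mul, hχ w hwZ hwΓ, ← hzeq, map_mul]
    ext v
    simp [smul_smul, mul_comm]
  refine ⟨{ toFun := σfun, map_one' := ?_, map_mul' := ?_ }, ?_⟩
  · show σfun 1 = 1
    have := hwd 1 1 1 Γ.one_mem (Subgroup.center G').one_mem (by simp)
    rw [this]
    have hz1 : (⟨(1:G'), (Subgroup.center G').one_mem⟩ : ↥(Subgroup.center G')) = 1 := rfl
    have hg1 : (⟨(1:G'), Γ.one_mem⟩ : ↥Γ) = 1 := rfl
    rw [hz1, hg1, map_one, map_one]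
    simp
  · intro x y
    show σfun (x * y) = σfun x * σfun y
    have hzc : ∀ (a : G'), zf x * a = a * zf x := fun a =>
      (Subgroup.mem_center_iff.mp (hzf x) a).symm
    have hxy : ((x * y : _) : G') = (γf x * γf y) * (zf x * zf y) := by
      rw [Subgroup.coe_mul, hxf x, hxf y]
      rw [mul_assoc, ← mul_assoc (zf x), hzc (γf y), mul_assoc, ← mul_assoc]
    have := hwd (x * y) (γf x * γf y) (zf x * zf y) (Γ.mul_mem (hγf x) (hγf y))
      ((Subgroup.center G').mul_mem (hzf x) (hzf y)) hxy
    rw [this]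
    have h1 : (⟨γf x * γf y, _⟩ : ↥Γ) = ⟨γf x, hγf x⟩ * ⟨γf y, hγf y⟩ := rfl
    have h2 : (⟨zf x * zf y, _⟩ : ↥(Subgroup.center G')) =
        ⟨zf x, hzf x⟩ * ⟨zf y, hzf y⟩ := rfl
    rw [h1, h2, map_mul, map_mul]
    ext v
    show ((χ ⟨zf x, hzf x⟩ * χ ⟨zf y, hzf y⟩ : ℂˣ) : ℂ) •
        (ρ.ρ ⟨γf x, hγf x⟩) ((ρ.ρ ⟨γf y, hγf y⟩) v)
      = ((χ ⟨zf x, hzf x⟩ : ℂˣ) : ℂ) •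
        (ρ.ρ ⟨γf x, hγf x⟩) (((χ ⟨zf y, hzf y⟩ : ℂˣ) : ℂ) • (ρ.ρ ⟨γf y, hγf y⟩) v)
    simp [smul_smul, mul_comm]
  · intro γ
    show σfun (Subgroup.inclusion le_sup_left γ) = ρ.ρ γ
    have hcoe : ((Subgroup.inclusion (le_sup_left : Γ ≤ Γ ⊔ Subgroup.center G') γ : _) : G')
        = (γ : G') * 1 := by simp
    have := hwd _ (γ : G') 1 γ.2 (Subgroup.center G').one_mem hcoe
    rw [this]
    have hz1 : (⟨(1:G'), (Subgroup.center G').one_mem⟩ : ↥(Subgroup.center G')) = 1 := rfl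
    have hg : (⟨(γ : G'), γ.2⟩ : ↥Γ) = γ := rfl
    rw [hz1, hg, map_one]
    simp

lemma sigma_simple (ρ : FDRep ℂ ↥Γ) (hρ : Simple ρ)
    (σ : Representation ℂ ↥(Γ ⊔ Subgroup.center G') ↥(ρ.V))
    (hres : ∀ γ : ↥Γ, σ (Subgroup.inclusion le_sup_left γ) = ρ.ρ γ) :
    Simple (FDRep.of σ) := by
  haveI := hρ
  have hV : ∃ v : ρ.V, v ≠ 0 := by
    by_contra hc
    push_neg at hc
    apply id_nonzero ρ
    ext v
    exact hc v
  obtain ⟨v₀, hv₀⟩ := hV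
  constructor
  intro Y f m
  constructor
  · intro hiso h0
    have hzero : inv f ≫ f = inv f ≫ 0 := congrArg (fun t => inv f ≫ t) h0
    rw [Limits.comp_zero, IsIso.inv_hom_id] at hzero
    have h := ConcreteCategory.congr_hom (congrArg Action.Hom.hom hzero) v₀
    exact hv₀ h
  · intro hne
    let Yres : FDRep ℂ ↥Γ :=
      FDRep.of ((Y.ρ : ↥(Γ ⊔ Subgroup.center G') →* _).comp (Subgroup.inclusion le_sup_left))
    let g : Yres ⟶ ρ :=
      { hom := f.hom
        comm := fun γ => by
          have h := f.comm (Subgroup.inclusion (le_sup_left : Γ ≤ Γ ⊔ Subgroup.center G') γ)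
          ext x
          have hx := ConcreteCategory.congr_hom h x
          show f.hom (Y.ρ (Subgroup.inclusion le_sup_left γ) x) = ρ.ρ γ (f.hom x)
          rw [← hres γ]
          exact hx }
    haveI : Mono g := fdRep_mono_of_injective g (fdRep_mono_injective f)
    have hgiso : IsIso g := by
      rw [hρ.mono_isIso_iff_nonzero g]
      intro h0
      apply hne
      ext x
      exact ConcreteCategory.congr_hom (congrArg Action.Hom.hom h0) x
    have hbij : Function.Bijective f.hom := by
      have h1 := ConcreteCategory.congr_hom (congrArg Action.Hom.hom (IsIso.hom_inv_id g)) 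
      have h2 := ConcreteCategory.congr_hom (congrArg Action.Hom.hom (IsIso.inv_hom_id g))
      exact Function.bijective_iff_has_inverse.mpr
        ⟨(inv g).hom, fun x => h1 x, fun y => h2 y⟩
    exact fdRep_isIso_of_bijective f hbij



end CentralChar
end Aux

/-- Let `Γ ⊆ Γ'' ⊆ Γ'` be finite groups with `Γ'' = Γ·Z(Γ')`, and let
`Ω` be a finite `Γ`-set.  Then `μ(Γ, Ω) ≤ μ(Γ'', Ω ×_Γ Γ'')`: the maximal multiplicity
of an irreducible representation of `Γ` in `ℂ[Ω]` is at most the maximal multiplicity of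
an irreducible representation of `Γ''` in the induced permutation representation
`ℂ[Ω ×_Γ Γ'']`.  The inequality of maxima is formulated by saying that any bound `M` for
all the `Γ''`-multiplicities yields the bound `M` for all the `Γ`-multiplicities. -/
theorem stmt5 {G' : Type} [Group G'] [Fintype G'] (Γ : Subgroup G')
    (Ω : Type) [Fintype Ω] [MulAction ↥Γ Ω] (M : ℕ)
    (hM : ∀ σ : FDRep ℂ ↥(Γ ⊔ Subgroup.center G'), Simple σ →
      Module.finrank ℂ
        (σ ⟶ FDRep.of (Representation.ofMulAction ℂ ↥(Γ ⊔ Subgroup.center G')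
          (IndSet (Subgroup.inclusion (le_sup_left : Γ ≤ Γ ⊔ Subgroup.center G')) Ω))) ≤ M)
    (ρ : FDRep ℂ ↥Γ) (hρ : Simple ρ) :
    Module.finrank ℂ (ρ ⟶ FDRep.of (Representation.ofMulAction ℂ ↥Γ Ω)) ≤ M := by
  classical
  obtain ⟨σ, hres⟩ := exists_sigma Γ ρ hρ
  set Gd := ↥(Γ ⊔ Subgroup.center G') with hGd
  set j : ↥Γ →* ↥(Γ ⊔ Subgroup.center G') :=
    Subgroup.inclusion (le_sup_left : Γ ≤ Γ ⊔ Subgroup.center G') with hj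
  set A := FDRep.of (Representation.ofMulAction ℂ ↥Γ Ω) with hA
  set B := FDRep.of (Representation.ofMulAction ℂ ↥(Γ ⊔ Subgroup.center G')
    (IndSet (Subgroup.inclusion (le_sup_left : Γ ≤ Γ ⊔ Subgroup.center G')) Ω)) with hB
  let eA : ↑A.V → (Ω →₀ ℂ) := fun x => MonoidAlgebra.coeff (show MonoidAlgebra ℂ Ω from x)
  let eB : ↑B.V → (IndSet j Ω →₀ ℂ) := fun x => MonoidAlgebra.coeff (show MonoidAlgebra ℂ (IndSet j Ω) from x)
  -- the well-definedness of the lifted function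
  have hwd : ∀ (f : ρ ⟶ A) (v : ↥ρ.V) (p q : Ω × ↥(Γ ⊔ Subgroup.center G')),
      (indSetoid j Ω).r p q →
      eA (f.hom (σ p.2 v)) p.1 = eA (f.hom (σ q.2 v)) q.1 := by
    rintro f v p q ⟨γ, rfl⟩
    show eA (f.hom (σ (j γ * q.2) v)) (γ • q.1) = _
    rw [map_mul, hres γ, Module.End.mul_apply]
    have hc := fdRep_hom_comm_apply f γ (σ q.2 v)
    refine Eq.trans (congrArg (fun t => eA t (γ • q.1)) hc) ?_
    show (Representation.ofMulAction ℂ ↥Γ Ω γ (f.hom (σ q.2 v))).coeff (γ • q.1)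
      = MonoidAlgebra.coeff (f.hom (σ q.2 v)) q.1
    rw [Representation.ofMulAction_apply, inv_smul_smul]
  -- the induced morphism
  let T : (ρ ⟶ A) → (FDRep.of σ ⟶ B) := fun f =>
    { hom := FGModuleCat.ofHom
        { toFun := fun v => MonoidAlgebra.ofCoeff (Finsupp.equivFunOnFinite.symm
            (Quotient.lift (fun p => eA (f.hom (σ p.2 v)) p.1) (hwd f v)))
          map_add' := fun v w => by
            apply MonoidAlgebra.ext
            apply Finsupp.ext
            intro x
            obtain ⟨p⟩ := x
            show eA (f.hom (σ p.2 (v + w))) p.1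
              = eA (f.hom (σ p.2 v)) p.1 + eA (f.hom (σ p.2 w)) p.1
            rw [map_add, map_add]
            rfl
          map_smul' := fun c v => by
            apply MonoidAlgebra.ext
            apply Finsupp.ext
            intro x
            obtain ⟨p⟩ := x
            show eA (f.hom (σ p.2 (c • v))) p.1 = c • eA (f.hom (σ p.2 v)) p.1
            rw [map_smul, map_smul]
            rfl }
      comm := fun x => by
        let x' : ↥(Γ ⊔ Subgroup.center G') := x
        apply FGModuleCat.hom_ext
        apply LinearMap.ext
        intro v
        apply MonoidAlgebra.ext
        apply Finsupp.ext
        intro q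
        obtain ⟨p⟩ := q
        show eA (f.hom (σ p.2 (σ x' v))) p.1
          = (Representation.ofMulAction ℂ ↥(Γ ⊔ Subgroup.center G') (IndSet j Ω) x'
              (MonoidAlgebra.ofCoeff (Finsupp.equivFunOnFinite.symm
                (Quotient.lift (fun p => eA (f.hom (σ p.2 v)) p.1) (hwd f v))))).coeff ⟦p⟧
        refine Eq.trans ?_ (Representation.ofMulAction_apply _ _ _).symm
        show eA (f.hom (σ p.2 (σ x' v))) p.1 = eA (f.hom (σ (p.2 * x'⁻¹⁻¹) v)) p.1
        rw [inv_inv, map_mul, Module.End.mul_apply] }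
  have hT : ∀ (f : ρ ⟶ A) (v : ↥ρ.V) (p : Ω × ↥(Γ ⊔ Subgroup.center G')),
      eB ((T f).hom v) ⟦p⟧ = eA (f.hom (σ p.2 v)) p.1 :=
    fun f v p => rfl
  -- linearity of T
  let Φ : (ρ ⟶ A) →ₗ[ℂ] (FDRep.of σ ⟶ B) :=
    { toFun := T
      map_add' := fun f g => by
        ext v q
        obtain ⟨p⟩ := q
        show eB ((T (f + g)).hom v) ⟦p⟧
          = (eB ((T f).hom v) + eB ((T g).hom v)) ⟦p⟧
        show eA ((f.hom + g.hom) (σ p.2 v)) p.1 = eA (f.hom (σ p.2 v)) p.1 + eA (g.hom (σ p.2 v)) p.1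
        exact Finsupp.add_apply _ _ _
      map_smul' := fun c f => by
        ext v q
        obtain ⟨p⟩ := q
        show eB ((T (c • f)).hom v) ⟦p⟧
          = (c • eB ((T f).hom v)) ⟦p⟧
        show eA ((c • f.hom) (σ p.2 v)) p.1 = c • eA (f.hom (σ p.2 v)) p.1
        exact Finsupp.smul_apply _ _ _ }
  have hinj : Function.Injective Φ := by
    intro f g hfg
    ext v ω
    show eA (f.hom v) ω = eA (g.hom v) ω
    have h3 : eB ((T f).hom v) ⟦(ω, (1 : Gd))⟧ = eB ((T g).hom v) ⟦(ω, (1 : Gd))⟧ :=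
      congrArg (fun t => eB ((t).hom v) ⟦(ω, (1 : Gd))⟧) hfg
    rw [hT f v (ω, 1), hT g v (ω, 1)] at h3
    simpa using h3
  calc Module.finrank ℂ (ρ ⟶ A) ≤ Module.finrank ℂ (FDRep.of σ ⟶ B) :=
        LinearMap.finrank_le_finrank_of_injective hinj
    _ ≤ M := hM (FDRep.of σ) (sigma_simple Γ ρ hρ σ hres)
end

section
/- Let φ : ℂ(x₁,…,x_m) be a rational function in m variables over ℂ, and let v ∈ (ℂ^×)^m be such that φ is defined (regular) at vⁿ = (v₁ⁿ,…,v_mⁿ) for all positive integers n, and the set {φ(vⁿ) : n ∈ ℤ_{>0}} is finite. Then the function n ↦ φ(vⁿ) is periodic: there exists a positive integer T such that φ(v^{n+T}) = φ(vⁿ) for all n ∈ ℤ_{>0}. -/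
open Finset

/-- Vandermonde step, `Fin` version: if a nondegenerate exponential sum with distinct
nonzero bases vanishes at `k` consecutive integers, the coefficients vanish. -/
private lemma vdm_aux {k : ℕ} (w : Fin k → ℂ) (hw : Function.Injective w)
    (hw0 : ∀ i, w i ≠ 0) (c : Fin k → ℂ) (n0 : ℕ)
    (hz : ∀ j : Fin k, ∑ i, c i * w i ^ (n0 + (j : ℕ)) = 0) : c = 0 := by
  set M : Matrix (Fin k) (Fin k) ℂ := fun j i => w i ^ (n0 + (j : ℕ)) with hM
  have hMeq : M = (Matrix.vandermonde w).transpose * Matrix.diagonal (fun i => w i ^ n0) := by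
    ext j i
    simp [Matrix.mul_diagonal, Matrix.vandermonde, hM, pow_add, mul_comm]
  have hdet : M.det ≠ 0 := by
    rw [hMeq, Matrix.det_mul, Matrix.det_transpose, Matrix.det_diagonal]
    exact mul_ne_zero (Matrix.det_vandermonde_ne_zero_iff.mpr hw)
      (Finset.prod_ne_zero_iff.mpr fun i _ => pow_ne_zero _ (hw0 i))
  apply Matrix.eq_zero_of_mulVec_eq_zero hdet
  funext j
  have := hz j
  simpa [Matrix.mulVec, dotProduct, hM, mul_comm] using this

private lemma vdm_finset (s : Finset ℂ) (h0 : ∀ x ∈ s, x ≠ 0) (c : ℂ → ℂ) (n0 : ℕ)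
    (hz : ∀ j < s.card, ∑ x ∈ s, c x * x ^ (n0 + j) = 0) :
    ∀ x ∈ s, c x = 0 := by
  classical
  set e := s.equivFin with he
  set w : Fin s.card → ℂ := fun i => (e.symm i : ℂ) with hw
  have hwinj : Function.Injective w := fun a b hab => by
    apply e.symm.injective; exact Subtype.ext hab
  have hsum : ∀ n : ℕ, ∑ i, c (w i) * w i ^ n = ∑ x ∈ s, c x * x ^ n := by
    intro n
    rw [← Finset.sum_coe_sort s (fun x => c x * x ^ n)]
    exact Fintype.sum_equiv e.symm _ _ (fun i => rfl)
  have hc : (fun i => c (w i)) = 0 := by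
    apply vdm_aux w hwinj (fun i => h0 _ (e.symm i).2) _ n0
    intro j
    rw [hsum]
    exact hz j j.2
  intro x hx
  have : c (w (e ⟨x, hx⟩)) = 0 := congrFun hc (e ⟨x, hx⟩)
  simpa [hw] using this


/-- Let `φ = p/q` be a rational function in `m` variables over `ℂ`
(given by polynomials `p, q` with `q` not vanishing at the relevant points, i.e. `φ` is
regular there), and let `v ∈ (ℂ^×)^m` be such that `φ` is defined at
`vⁿ = (v₁ⁿ,…,v_mⁿ)` for all positive integers `n`, and the set `{φ(vⁿ) : n > 0}` is
finite.  Then `n ↦ φ(vⁿ)` is periodic: there is `T > 0` with `φ(v^(n+T)) = φ(vⁿ)` for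
all `n > 0`. -/
theorem stmt6 {m : ℕ} (p q : MvPolynomial (Fin m) ℂ) (v : Fin m → ℂ)
    (hv : ∀ i, v i ≠ 0)
    (hreg : ∀ n : ℕ, 0 < n → MvPolynomial.eval (fun i => v i ^ n) q ≠ 0)
    (hfin : {c : ℂ | ∃ n : ℕ, 0 < n ∧
        c = MvPolynomial.eval (fun i => v i ^ n) p /
            MvPolynomial.eval (fun i => v i ^ n) q}.Finite) :
    ∃ T : ℕ, 0 < T ∧ ∀ n : ℕ, 0 < n →
      MvPolynomial.eval (fun i => v i ^ (n + T)) p /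
          MvPolynomial.eval (fun i => v i ^ (n + T)) q =
        MvPolynomial.eval (fun i => v i ^ n) p /
          MvPolynomial.eval (fun i => v i ^ n) q := by
  classical
  -- weights
  set wf : (Fin m →₀ ℕ) → ℂ := fun d => ∏ i, v i ^ d i with hwf
  have hwf0 : ∀ d, wf d ≠ 0 := fun d =>
    Finset.prod_ne_zero_iff.mpr fun i _ => pow_ne_zero _ (hv i)
  -- exponential-sum representation of evaluations
  have hrep : ∀ (r : MvPolynomial (Fin m) ℂ) (n : ℕ),
      MvPolynomial.eval (fun i => v i ^ n) r
        = ∑ d ∈ r.support, MvPolynomial.coeff d r * wf d ^ n := by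
    intro r n
    rw [MvPolynomial.eval_eq']
    refine Finset.sum_congr rfl fun d _ => ?_
    rw [hwf, ← Finset.prod_pow]
    congr 1
    refine Finset.prod_congr rfl fun i _ => ?_
    rw [← pow_mul, ← pow_mul, mul_comm]
  set s2 : Finset ((Fin m →₀ ℕ) × (Fin m →₀ ℕ)) := p.support ×ˢ q.support with hs2
  set g : (Fin m →₀ ℕ) × (Fin m →₀ ℕ) → ℂ := fun x => wf x.1 * wf x.2 with hg
  set W2 : Finset ℂ := s2.image g with hW2
  set L : ℕ := W2.card with hL
  set c : ℕ → ℂ → ℂ := fun T t => ∑ x ∈ s2 with g x = t,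
      MvPolynomial.coeff x.1 p * MvPolynomial.coeff x.2 q * (wf x.1 ^ T - wf x.2 ^ T)
    with hc
  -- key identity
  have key : ∀ T n : ℕ, ∑ t ∈ W2, c T t * t ^ n
      = MvPolynomial.eval (fun i => v i ^ (n + T)) p * MvPolynomial.eval (fun i => v i ^ n) q
        - MvPolynomial.eval (fun i => v i ^ n) p
          * MvPolynomial.eval (fun i => v i ^ (n + T)) q := by
    intro T n
    have h1 : ∑ t ∈ W2, c T t * t ^ n = ∑ x ∈ s2,
        MvPolynomial.coeff x.1 p * MvPolynomial.coeff x.2 q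
          * (wf x.1 ^ T - wf x.2 ^ T) * g x ^ n := by
      rw [hW2]
      refine Finset.sum_image' _ fun x hx => ?_
      rw [hc, Finset.sum_mul]
      refine Finset.sum_congr rfl fun y hy => ?_
      rw [(Finset.mem_filter.mp hy).2]
    have h2 : ∀ (T' : ℕ),
        MvPolynomial.eval (fun i => v i ^ T') p * MvPolynomial.eval (fun i => v i ^ n) q
          = ∑ x ∈ s2, (MvPolynomial.coeff x.1 p * wf x.1 ^ T')
              * (MvPolynomial.coeff x.2 q * wf x.2 ^ n) := by
      intro T'
      rw [hrep, hrep, Finset.sum_mul_sum, hs2, Finset.sum_product]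
    have h3 : MvPolynomial.eval (fun i => v i ^ n) p
          * MvPolynomial.eval (fun i => v i ^ (n + T)) q
        = ∑ x ∈ s2, (MvPolynomial.coeff x.1 p * wf x.1 ^ n)
            * (MvPolynomial.coeff x.2 q * wf x.2 ^ (n + T)) := by
      rw [hrep, hrep, Finset.sum_mul_sum, hs2, Finset.sum_product]
    rw [h1, h2 (n + T), h3, ← Finset.sum_sub_distrib]
    refine Finset.sum_congr rfl fun x hx => ?_
    rw [hg]
    simp only [pow_add, mul_pow]
    ring
  -- the value function and pigeonhole on windows of length L
  set f : ℕ → ℂ := fun n => MvPolynomial.eval (fun i => v i ^ n) p /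
      MvPolynomial.eval (fun i => v i ^ n) q with hf
  set S := {c : ℂ | ∃ n : ℕ, 0 < n ∧
      c = MvPolynomial.eval (fun i => v i ^ n) p /
          MvPolynomial.eval (fun i => v i ^ n) q} with hS
  set F : ℕ → (Fin L → ℂ) := fun n j => f (n + 1 + j) with hF
  have hmaps : Set.MapsTo F Set.univ (Set.pi Set.univ fun _ : Fin L => S) := by
    intro n _
    intro j _
    exact ⟨n + 1 + j, by omega, rfl⟩
  have hpigeon : ∃ a ∈ (Set.univ : Set ℕ), ∃ b ∈ (Set.univ : Set ℕ), a ≠ b ∧ F a = F b :=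
    Set.infinite_univ.exists_ne_map_eq_of_mapsTo hmaps (Set.Finite.pi fun _ => hfin)
  obtain ⟨a, -, b, -, hab, hFab⟩ := hpigeon
  -- wlog a < b
  obtain ⟨n1, n2, hlt, hF12⟩ : ∃ n1 n2 : ℕ, n1 < n2 ∧ F n1 = F n2 := by
    rcases lt_or_gt_of_ne hab with h | h
    · exact ⟨a, b, h, hFab⟩
    · exact ⟨b, a, h, hFab.symm⟩
  refine ⟨n2 - n1, by omega, ?_⟩
  -- cross-multiplied identity at L consecutive points
  set T := n2 - n1 with hT
  have hcross : ∀ j < L, ∑ t ∈ W2, c T t * t ^ (n1 + 1 + j) = 0 := by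
    intro j hj
    have hfe : f (n1 + 1 + j + T) = f (n1 + 1 + j) := by
      have := congrFun hF12 ⟨j, hj⟩
      simp only [hF] at this
      have harg : n2 + 1 + (⟨j, hj⟩ : Fin L).1 = n1 + 1 + j + T := by
        simp only [hT]; omega
      rw [harg] at this
      exact this.symm
    rw [key]
    have h1 : (0:ℕ) < n1 + 1 + j := by omega
    have h2 : (0:ℕ) < n1 + 1 + j + T := by omega
    have := (div_eq_div_iff (hreg _ h2) (hreg _ h1)).mp hfe
    rw [sub_eq_zero]
    exact this
  -- Vandermonde: all coefficients vanish
  have hW2ne : ∀ t ∈ W2, t ≠ 0 := by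
    intro t ht
    obtain ⟨x, -, rfl⟩ := Finset.mem_image.mp ht
    exact mul_ne_zero (hwf0 _) (hwf0 _)
  have hc0 : ∀ t ∈ W2, c T t = 0 := vdm_finset W2 hW2ne (c T) (n1 + 1) hcross
  -- conclude
  intro n hn
  have hzero : MvPolynomial.eval (fun i => v i ^ (n + T)) p
        * MvPolynomial.eval (fun i => v i ^ n) q
      - MvPolynomial.eval (fun i => v i ^ n) p
        * MvPolynomial.eval (fun i => v i ^ (n + T)) q = 0 := by
    rw [← key T n]
    exact Finset.sum_eq_zero fun t ht => by rw [hc0 t ht, zero_mul]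
  rw [div_eq_div_iff (hreg _ (by omega)) (hreg _ hn)]
  exact sub_eq_zero.mp hzero
end
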